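/- Let q > 1 be a real number, r ≥ 1, g ≥ 2 integers, and let β : ℤ → ℝ be a function satisfying β(d + r) = β(d) for all d. Then for any complex s with Re(s) > 1, the series ∑_{d ≥ r(2g-2)+1} β(d) · (q^{d - r(g-1)} - 1) · q^{-s·d} converges absolutely, and its sum equals ∑_{i=1}^{r} β(i) · q^{-s·i} · ( q^{i - r(g-1)} · q^{(1-s)·r(2g-2)} / (1 - q^{(1-s)·r}) − q^{-s·r(2g-2)} / (1 - q^{-s·r}) ). -/

import Mathlib

open Complex

/-- §1.2.2: convergence and evaluation of the tail of the rank-r non-abelian zeta function.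
For q > 1, r ≥ 1, g ≥ 2 and β : ℤ → ℝ periodic with period r, the series
∑_{d ≥ r(2g-2)+1} β(d)(q^{d-r(g-1)} − 1) q^{-sd} converges absolutely for Re(s) > 1 and
equals the stated closed form. -/
theorem stmt_0 (q : ℝ) (hq : 1 < q) (r g : ℕ) (hr : 1 ≤ r) (hg : 2 ≤ g)
    (β : ℤ → ℝ) (hβ : ∀ d : ℤ, β (d + r) = β d) (s : ℂ) (hs : 1 < s.re) :
    (Summable fun k : ℕ =>
      ‖(β ((r : ℤ)*(2*g-2)+1+k) : ℂ)
          * ((q : ℂ) ^ (((r : ℤ)*(2*g-2)+1+k) - (r : ℤ)*(g-1)) - 1)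
          * (q : ℂ) ^ (-s * ((((r : ℤ)*(2*g-2)+1+k) : ℤ) : ℂ))‖) ∧
    (∑' k : ℕ, (β ((r : ℤ)*(2*g-2)+1+k) : ℂ)
          * ((q : ℂ) ^ (((r : ℤ)*(2*g-2)+1+k) - (r : ℤ)*(g-1)) - 1)
          * (q : ℂ) ^ (-s * ((((r : ℤ)*(2*g-2)+1+k) : ℤ) : ℂ)))
      = ∑ i ∈ Finset.Icc 1 r, (β (i : ℤ) : ℂ) * (q : ℂ) ^ (-s * (i : ℂ)) *
          ( (q : ℂ) ^ ((i : ℤ) - (r : ℤ)*(g-1))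
              * (q : ℂ) ^ ((1-s) * ((r*(2*g-2) : ℕ) : ℂ)) / (1 - (q : ℂ) ^ ((1-s) * (r : ℂ)))
            - (q : ℂ) ^ ((-s) * ((r*(2*g-2) : ℕ) : ℂ)) / (1 - (q : ℂ) ^ ((-s) * (r : ℂ))) ) := by
  have hq0 : (0:ℝ) < q := lt_trans one_pos hq
  have hQ0 : (q:ℂ) ≠ 0 := by
    simp only [ne_eq, Complex.ofReal_eq_zero]
    exact hq0.ne'
  have hlog : 0 < Real.log q := Real.log_pos hq
  have hr0 : (0:ℝ) < (r:ℝ) := by exact_mod_cast hr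
  set L : ℂ := (Real.log q : ℂ) with hL
  have hcpow : ∀ z : ℂ, (q:ℂ) ^ z = Complex.exp (L * z) := by
    intro z
    rw [Complex.cpow_def_of_ne_zero hQ0, hL, Complex.ofReal_log hq0.le]
  have hzpow : ∀ m : ℤ, (q:ℂ) ^ m = Complex.exp (L * (m:ℂ)) := by
    intro m
    rw [← Complex.cpow_intCast, hcpow]
  have hnorm : ∀ z : ℂ, ‖Complex.exp (L * z)‖ = Real.exp (Real.log q * z.re) := by
    intro z
    rw [hL, Complex.norm_exp]
    congr 1
    simp [Complex.mul_re]
  set x : ℂ := Complex.exp (L * ((1-s) * (r:ℂ))) with hx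
  set y : ℂ := Complex.exp (L * ((-s) * (r:ℂ))) with hy
  have hxlt : ‖x‖ < 1 := by
    rw [hx, hnorm, Real.exp_lt_one_iff]
    have hre : ((1-s) * (r:ℂ)).re = (1 - s.re) * r := by
      simp [Complex.mul_re, Complex.sub_re]
    rw [hre]
    have h5 : Real.log q * ((1 - s.re) * r) = (1-s.re) * (Real.log q * r) := by ring
    rw [h5]
    exact mul_neg_of_neg_of_pos (by linarith) (mul_pos hlog hr0)
  have hylt : ‖y‖ < 1 := by
    rw [hy, hnorm, Real.exp_lt_one_iff]
    have hre : ((-s) * (r:ℂ)).re = -s.re * r := by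
      simp [Complex.mul_re]
    rw [hre]
    have h5 : Real.log q * (-s.re * r) = -(s.re * (Real.log q * r)) := by ring
    rw [h5, neg_lt_zero]
    exact mul_pos (by linarith) (mul_pos hlog hr0)
  have hx1 : (1 : ℂ) - x ≠ 0 := by
    intro h
    rw [sub_eq_zero] at h
    rw [← h] at hxlt
    simp at hxlt
  have hy1 : (1 : ℂ) - y ≠ 0 := by
    intro h
    rw [sub_eq_zero] at h
    rw [← h] at hylt
    simp at hylt
  set a : ℕ → ℂ := fun j => ((β (((j+1:ℕ)):ℤ) : ℝ) : ℂ) *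
      Complex.exp (L * (-s*((j:ℂ)+1) + (((j:ℂ)+1) - (r:ℂ)*((g:ℂ)-1))
        + (1-s)*((r:ℂ)*(2*(g:ℂ)-2)))) with ha
  set b : ℕ → ℂ := fun j => ((β (((j+1:ℕ)):ℤ) : ℝ) : ℂ) *
      Complex.exp (L * (-s*((j:ℂ)+1) + -s*((r:ℂ)*(2*(g:ℂ)-2)))) with hb
  -- periodicity
  have per : ∀ (d : ℤ) (m : ℕ), β (d + r * m) = β d := by
    intro d m
    induction m with
    | zero => simp
    | succ m ih =>
        have h1 : d + (r:ℤ) * ((m:ℕ)+1 : ℕ) = (d + r * m) + r := by push_cast; ring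
        rw [h1, hβ, ih]
  -- auxiliary algebraic identities
  have lhs_eq : ∀ (c u v : ℂ), c * (Complex.exp u - 1) * Complex.exp v
      = c * Complex.exp (u + v) - c * Complex.exp v := by
    intro c u v; rw [Complex.exp_add]; ring
  have expeq : ∀ (c u v : ℂ), u = v → c * Complex.exp u = c * Complex.exp v := by
    intro c u v h; rw [h]
  have expeq2 : ∀ (c w u v : ℂ), u = v → c * Complex.exp u * w = c * Complex.exp v * w := by
    intro c w u v h; rw [h]
  have rhs_term : ∀ (c z w : ℂ) (n : ℕ),
      (c * Complex.exp z) * (Complex.exp w) ^ n = c * Complex.exp (z + (n:ℂ) * w) := by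
    intro c z w n; rw [Complex.exp_add, Complex.exp_nat_mul]; ring
  -- the key pointwise identity
  have hkey : ∀ n j : ℕ,
      (β ((r : ℤ)*(2*g-2)+1+(n*r+j : ℕ)) : ℂ)
          * ((q : ℂ) ^ (((r : ℤ)*(2*g-2)+1+(n*r+j : ℕ)) - (r : ℤ)*(g-1)) - 1)
          * (q : ℂ) ^ (-s * ((((r : ℤ)*(2*g-2)+1+(n*r+j : ℕ)) : ℤ) : ℂ))
      = a j * x ^ n - b j * y ^ n := by
    intro n j
    have hm : ((2*g-2+n : ℕ):ℤ) = 2*(g:ℤ)-2+(n:ℤ) := by omega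
    have hβeq : β ((r : ℤ)*(2*g-2)+1+(n*r+j : ℕ)) = β (((j+1:ℕ)):ℤ) := by
      have h2 : (r:ℤ)*(2*(g:ℤ)-2)+1+((n*r+j : ℕ):ℤ)
          = ((j+1:ℕ):ℤ) + (r:ℤ) * ((2*g-2+n : ℕ) : ℤ) := by
        rw [hm]; push_cast; ring
      rw [h2, per]
    rw [hβeq]
    simp only [ha, hb, hx, hy, hzpow, hcpow]
    rw [lhs_eq, rhs_term, rhs_term]
    congr 1
    · exact expeq _ _ _ (by push_cast; ring)
    · exact expeq _ _ _ (by push_cast; ring)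
  haveI : NeZero r := ⟨by omega⟩
  set e : ℕ ≃ Fin r × ℕ := (Nat.divModEquiv r).trans (Equiv.prodComm ℕ (Fin r)) with he
  have hesymm : ∀ p : Fin r × ℕ, e.symm p = p.2 * r + (p.1 : ℕ) := fun p => rfl
  have hk : ∀ k : ℕ, (k / r) * r + k % r = k := fun k => by
    rw [mul_comm]; exact Nat.div_add_mod k r
  have heq : ∀ k : ℕ, e k = (⟨k % r, Nat.mod_lt k (by omega)⟩, k / r) := by
    intro k
    refine e.symm.injective ?_
    rw [Equiv.symm_apply_apply, hesymm]
    exact (hk k).symm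
  set G : Fin r × ℕ → ℂ := fun p => a (p.1 : ℕ) * x ^ p.2 - b (p.1 : ℕ) * y ^ p.2 with hG
  have heapp : ∀ k : ℕ, G (e k) = a (k % r) * x ^ (k / r) - b (k % r) * y ^ (k / r) := by
    intro k
    rw [heq k]
  have hbody : ∀ k : ℕ,
      (β ((r : ℤ)*(2*g-2)+1+k) : ℂ)
          * ((q : ℂ) ^ (((r : ℤ)*(2*g-2)+1+k) - (r : ℤ)*(g-1)) - 1)
          * (q : ℂ) ^ (-s * ((((r : ℤ)*(2*g-2)+1+k) : ℤ) : ℂ))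
      = G (e k) := by
    intro k
    rw [heapp k]
    have h := hkey (k / r) (k % r)
    rw [hk k] at h
    exact h
  have hGsum : ∀ j : ℕ, Summable (fun n : ℕ => a j * x ^ n - b j * y ^ n) := fun j =>
    ((summable_geometric_of_norm_lt_one hxlt).mul_left (a j)).sub
      ((summable_geometric_of_norm_lt_one hylt).mul_left (b j))
  have hGnorm : Summable (fun p : Fin r × ℕ => ‖G p‖) := by
    apply (summable_prod_of_nonneg (fun p => norm_nonneg _)).mpr
    constructor
    · intro j
      exact summable_norm_iff.mpr (hGsum j)
    · exact Summable.of_finite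
  have hGsummable : Summable G := summable_norm_iff.mp hGnorm
  constructor
  · have h7 : Summable ((fun p => ‖G p‖) ∘ e) := (Equiv.summable_iff e).mpr hGnorm
    exact h7.congr (fun k => by
      simp only [Function.comp_apply]
      rw [← hbody k])
  · calc (∑' k : ℕ, (β ((r : ℤ)*(2*g-2)+1+k) : ℂ)
          * ((q : ℂ) ^ (((r : ℤ)*(2*g-2)+1+k) - (r : ℤ)*(g-1)) - 1)
          * (q : ℂ) ^ (-s * ((((r : ℤ)*(2*g-2)+1+k) : ℤ) : ℂ)))
        = ∑' k : ℕ, G (e k) := tsum_congr (fun k => hbody k)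
      _ = ∑' p : Fin r × ℕ, G p := e.tsum_eq G
      _ = ∑' (j : Fin r), ∑' (n : ℕ), G (j, n) := hGsummable.tsum_prod
      _ = ∑ j : Fin r, ∑' (n : ℕ), G (j, n) := tsum_fintype _
      _ = ∑ j : Fin r, (a (j:ℕ) * (1-x)⁻¹ - b (j:ℕ) * (1-y)⁻¹) := by
          refine Finset.sum_congr rfl fun j _ => ?_
          show ∑' (n : ℕ), (a (j:ℕ) * x ^ n - b (j:ℕ) * y ^ n) = _
          rw [Summable.tsum_sub ((summable_geometric_of_norm_lt_one hxlt).mul_left _)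
              ((summable_geometric_of_norm_lt_one hylt).mul_left _),
            tsum_mul_left, tsum_mul_left, tsum_geometric_of_norm_lt_one hxlt,
            tsum_geometric_of_norm_lt_one hylt]
      _ = ∑ j ∈ Finset.range r, (a j * (1-x)⁻¹ - b j * (1-y)⁻¹) :=
          Fin.sum_univ_eq_sum_range (fun j => a j * (1-x)⁻¹ - b j * (1-y)⁻¹) r
      _ = ∑ i ∈ Finset.Icc 1 r, (β (i : ℤ) : ℂ) * (q : ℂ) ^ (-s * (i : ℂ)) *
          ( (q : ℂ) ^ ((i : ℤ) - (r : ℤ)*(g-1))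
              * (q : ℂ) ^ ((1-s) * ((r*(2*g-2) : ℕ) : ℂ)) / (1 - (q : ℂ) ^ ((1-s) * (r : ℂ)))
            - (q : ℂ) ^ ((-s) * ((r*(2*g-2) : ℕ) : ℂ)) / (1 - (q : ℂ) ^ ((-s) * (r : ℂ))) ) := by
          have hN : ((r*(2*g-2) : ℕ) : ℂ) = (r:ℂ)*(2*(g:ℂ)-2) := by
            have h4 : ((r*(2*g-2) : ℕ) : ℤ) = (r:ℤ)*(2*(g:ℤ)-2) := by
              have : ((2*g-2 : ℕ) : ℤ) = 2*(g:ℤ)-2 := by omega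
              rw [Nat.cast_mul, this]
            exact_mod_cast h4
          refine Finset.sum_bij' (fun j _ => j + 1) (fun i _ => i - 1) ?_ ?_ ?_ ?_ ?_
          · intro j hj
            simp only [Finset.mem_range] at hj
            simp only [Finset.mem_Icc]
            omega
          · intro i hi
            simp only [Finset.mem_Icc] at hi
            simp only [Finset.mem_range]
            omega
          · intro j hj
            omega
          · intro i hi
            simp only [Finset.mem_Icc] at hi
            omega
          · intro j hj
            simp only [hcpow, hzpow, hN, ← hx, ← hy]
            have hsplit2 : ∀ (c e1 e2 e3 e4 X Y : ℂ),
                c * Complex.exp e1 * (Complex.exp e2 * Complex.exp e3 / X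
                  - Complex.exp e4 / Y)
                = c * Complex.exp (e1+e2+e3) / X - c * Complex.exp (e1+e4) / Y := by
              intro c e1 e2 e3 e4 X Y
              rw [Complex.exp_add, Complex.exp_add, Complex.exp_add]
              ring
            rw [hsplit2]
            simp only [ha, hb, div_eq_mul_inv]
            congr 1
            · exact expeq2 _ _ _ _ (by push_cast; ring)
            · exact expeq2 _ _ _ _ (by push_cast; ring)
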